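/- If the mutual coherence of a dictionary Ψ with unit-norm columns satisfies μ(Ψ) < 1/(2s−1), then every s-sparse vector α is the unique s-sparse solution of the equation Ψα = Ψβ; i.e., distinct s-sparse coefficient vectors produce distinct signals. -/
import Mathlib


open scoped Classical

/-- `α` is `s`-sparse: at most `s` nonzero entries. -/
def Sparse {d : ℕ} (s : ℕ) (α : Fin d → ℝ) : Prop :=
  (Finset.univ.filter fun i => α i ≠ 0).card ≤ s

/-- Uniqueness via coherence: if the dictionary has unit-norm columns and mutual
coherence μ < 1/(2s−1), then distinct s-sparse coefficient vectors produce
distinct signals. -/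
theorem coherence_uniqueness (p d s : ℕ) (hs : 1 ≤ s)
    (Ψ : Matrix (Fin p) (Fin d) ℝ)
    (hcols : ∀ j, ∑ k, Ψ k j ^ 2 = 1)
    (μ : ℝ) (hμ : ∀ i j, i ≠ j → |∑ k, Ψ k i * Ψ k j| ≤ μ)
    (hμs : μ < 1 / (2 * (s : ℝ) - 1)) :
    ∀ α β : Fin d → ℝ, Sparse s α → Sparse s β →
      Ψ.mulVec α = Ψ.mulVec β → α = β := by
  intro α β hα hβ heq
  by_contra hne
  set x : Fin d → ℝ := fun i => α i - β i with hx
  have hx0 : Ψ.mulVec x = 0 := by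
    funext k
    simp only [Matrix.mulVec, dotProduct, hx, mul_sub, Finset.sum_sub_distrib,
      Pi.zero_apply]
    have := congrFun heq k
    simp only [Matrix.mulVec, dotProduct] at this
    linarith
  -- support of x
  set supp : Finset (Fin d) := Finset.univ.filter (fun i => x i ≠ 0) with hsupp
  have hsne : supp.Nonempty := by
    by_contra h
    apply hne
    funext i
    have : x i = 0 := by
      by_contra hxi
      exact h ⟨i, by simp [hsupp, hxi]⟩
    have : α i - β i = 0 := this
    linarith
  -- support cardinality bound
  have hcard : supp.card ≤ 2 * s := by
    have hsub : supp ⊆ (Finset.univ.filter fun i => α i ≠ 0) ∪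
        (Finset.univ.filter fun i => β i ≠ 0) := by
      intro i hi
      simp only [hsupp, Finset.mem_filter, Finset.mem_univ, true_and] at hi
      simp only [Finset.mem_union, Finset.mem_filter, Finset.mem_univ, true_and]
      by_contra h
      push_neg at h
      apply hi
      simp [hx, h.1, h.2]
    calc supp.card ≤ _ := Finset.card_le_card hsub
      _ ≤ _ := Finset.card_union_le _ _
      _ ≤ s + s := add_le_add hα hβ
      _ = 2 * s := (two_mul s).symm
  -- pick maximizer
  obtain ⟨i₀, hi₀s, hi₀max⟩ := supp.exists_max_image (fun i => |x i|) hsne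
  have hxi₀ : x i₀ ≠ 0 := by
    simpa [hsupp] using hi₀s
  have hMpos : 0 < |x i₀| := abs_pos.mpr hxi₀
  -- the key identity: 0 = ∑_j x j * ⟨ψ_{i₀}, ψ_j⟩
  have hkey : ∑ j, x j * (∑ k, Ψ k i₀ * Ψ k j) = 0 := by
    have h1 : ∑ k, Ψ k i₀ * (Ψ.mulVec x) k = 0 := by
      simp [hx0]
    rw [← h1]
    simp only [Matrix.mulVec, dotProduct, Finset.mul_sum]
    rw [Finset.sum_comm]
    congr 1
    funext j
    congr 1
    funext k
    ring
  -- split off the diagonal term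
  have hdiag : (∑ k, Ψ k i₀ * Ψ k i₀) = 1 := by
    have := hcols i₀
    simpa [pow_two] using this
  have hsplit : x i₀ + ∑ j ∈ Finset.univ.erase i₀, x j * (∑ k, Ψ k i₀ * Ψ k j) = 0 := by
    have := hkey
    rw [← Finset.add_sum_erase _ _ (Finset.mem_univ i₀)] at this
    rw [hdiag, mul_one] at this
    exact this
  -- restrict sum to support
  have hrestrict : ∑ j ∈ Finset.univ.erase i₀, x j * (∑ k, Ψ k i₀ * Ψ k j)
      = ∑ j ∈ supp.erase i₀, x j * (∑ k, Ψ k i₀ * Ψ k j) := by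
    symm
    apply Finset.sum_subset
    · intro j hj
      simp only [Finset.mem_erase, hsupp, Finset.mem_filter, Finset.mem_univ, true_and] at hj ⊢
      exact ⟨hj.1, trivial⟩
    · intro j hj hj2
      simp only [Finset.mem_erase, hsupp, Finset.mem_filter, Finset.mem_univ, true_and,
        not_and] at hj hj2
      have : x j = 0 := by
        by_contra h
        exact (hj2 hj.1) h
      simp [this]
  have hxi₀eq : |x i₀| = |∑ j ∈ supp.erase i₀, x j * (∑ k, Ψ k i₀ * Ψ k j)| := by
    rw [← hrestrict]
    have : x i₀ = -(∑ j ∈ Finset.univ.erase i₀, x j * (∑ k, Ψ k i₀ * Ψ k j)) := by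
      linarith
    rw [this, abs_neg]
  -- case on whether supp.erase i₀ is empty
  rcases (supp.erase i₀).eq_empty_or_nonempty with hemp | ⟨j₁, hj₁⟩
  · rw [hemp] at hxi₀eq
    simp at hxi₀eq
    exact hxi₀ hxi₀eq
  · have hj₁ne : j₁ ≠ i₀ := (Finset.mem_erase.mp hj₁).1
    have hμ0 : 0 ≤ μ := le_trans (abs_nonneg _) (hμ i₀ j₁ (Ne.symm hj₁ne))
    have hbound : |x i₀| ≤ ((supp.erase i₀).card : ℝ) * (μ * |x i₀|) := by
      calc |x i₀| = |∑ j ∈ supp.erase i₀, x j * (∑ k, Ψ k i₀ * Ψ k j)| := hxi₀eq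
        _ ≤ ∑ j ∈ supp.erase i₀, |x j * (∑ k, Ψ k i₀ * Ψ k j)| :=
            Finset.abs_sum_le_sum_abs _ _
        _ ≤ ∑ _j ∈ supp.erase i₀, μ * |x i₀| := by
            apply Finset.sum_le_sum
            intro j hj
            have hjne : j ≠ i₀ := (Finset.mem_erase.mp hj).1
            have hjs : j ∈ supp := (Finset.mem_erase.mp hj).2
            have h1 : |x j| ≤ |x i₀| := hi₀max j hjs
            have h2 : |∑ k, Ψ k i₀ * Ψ k j| ≤ μ := hμ i₀ j (Ne.symm hjne)
            rw [abs_mul]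
            calc |x j| * |∑ k, Ψ k i₀ * Ψ k j| ≤ |x i₀| * μ :=
              mul_le_mul h1 h2 (abs_nonneg _) (abs_nonneg _)
              _ = μ * |x i₀| := by ring
        _ = ((supp.erase i₀).card : ℝ) * (μ * |x i₀|) := by
            rw [Finset.sum_const, nsmul_eq_mul]
    have hcard' : ((supp.erase i₀).card : ℝ) ≤ 2 * (s : ℝ) - 1 := by
      have h1 : (supp.erase i₀).card = supp.card - 1 := Finset.card_erase_of_mem hi₀s
      have h2 : supp.card - 1 ≤ 2 * s - 1 := by omega
      have h3 : (1:ℕ) ≤ 2 * s := by omega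
      have : ((supp.card - 1 : ℕ) : ℝ) ≤ ((2 * s - 1 : ℕ) : ℝ) := Nat.cast_le.mpr h2
      rw [h1]
      calc ((supp.card - 1 : ℕ) : ℝ) ≤ ((2 * s - 1 : ℕ) : ℝ) := this
        _ = 2 * (s : ℝ) - 1 := by
            push_cast [Nat.cast_sub h3]
            ring
    have hden : (0:ℝ) < 2 * (s : ℝ) - 1 := by
      have : (1:ℝ) ≤ (s:ℝ) := by exact_mod_cast hs
      linarith
    have hμs' : μ * (2 * (s : ℝ) - 1) < 1 := by
      rw [lt_div_iff₀ hden] at hμs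
      linarith
    have : |x i₀| ≤ (2 * (s:ℝ) - 1) * (μ * |x i₀|) := by
      calc |x i₀| ≤ ((supp.erase i₀).card : ℝ) * (μ * |x i₀|) := hbound
        _ ≤ (2 * (s:ℝ) - 1) * (μ * |x i₀|) := by
            apply mul_le_mul_of_nonneg_right hcard'
            positivity
    nlinarith
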